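/- arXiv:2603.04231 — 3 statements merged into one kernel-verified Lean document; each statement's English description precedes it below -/
import Mathlib

section
/- Let $U_1, U_2 \subseteq \mathbb{R}^p$ be linear subspaces and let $\theta \in (0,2)$. Given any initial point $v^0 \in \mathbb{R}^p$, define the Douglas–Rachford iteration by $x_1^{k+1} = P_{U_1}(v^k)$, $x_2^{k+1} = P_{U_2}(2 x_1^{k+1} - v^k)$, $v^{k+1} = v^k + \theta (x_2^{k+1} - x_1^{k+1})$. Then there exists $v^* \in \mathbb{R}^p$ such that $v^k \to v^*$, and setting $x^* = P_{U_1}(v^*)$ one has $x_1^k \to x^*$, $x_2^k \to x^*$, $x^* = P_{U_2}(2 x^* - v^*)$, and $x^* \in U_1 \cap U_2$. -/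
open Filter Topology RealInnerProductSpace

noncomputable def proj {p : ℕ} (U : Submodule ℝ (EuclideanSpace ℝ (Fin p)))
    (v : EuclideanSpace ℝ (Fin p)) : EuclideanSpace ℝ (Fin p) :=
  (U.orthogonalProjection v : EuclideanSpace ℝ (Fin p))

set_option maxHeartbeats 1000000 in
theorem stmt0 {p : ℕ} (U₁ U₂ : Submodule ℝ (EuclideanSpace ℝ (Fin p)))
    (θ : ℝ) (hθ : θ ∈ Set.Ioo (0 : ℝ) 2)
    (v x₁ x₂ : ℕ → EuclideanSpace ℝ (Fin p))
    (hx₁ : ∀ k, x₁ (k + 1) = proj U₁ (v k))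
    (hx₂ : ∀ k, x₂ (k + 1) = proj U₂ ((2 : ℝ) • x₁ (k + 1) - v k))
    (hv : ∀ k, v (k + 1) = v k + θ • (x₂ (k + 1) - x₁ (k + 1))) :
    ∃ vstar : EuclideanSpace ℝ (Fin p),
      Tendsto v atTop (𝓝 vstar) ∧
      Tendsto x₁ atTop (𝓝 (proj U₁ vstar)) ∧
      Tendsto x₂ atTop (𝓝 (proj U₁ vstar)) ∧
      proj U₁ vstar = proj U₂ ((2 : ℝ) • proj U₁ vstar - vstar) ∧
      proj U₁ vstar ∈ U₁ ⊓ U₂ := by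
  obtain ⟨hθ0, hθ2⟩ := hθ
  set α : ℝ := θ / 2 with hαdef
  have hα0 : 0 < α := by positivity
  have hα1 : α < 1 := by rw [hαdef]; linarith
  set Qe : (EuclideanSpace ℝ (Fin p)) ≃ₗᵢ[ℝ] (EuclideanSpace ℝ (Fin p)) := (Submodule.reflection U₁).trans (Submodule.reflection U₂) with hQe
  set T : (EuclideanSpace ℝ (Fin p)) → (EuclideanSpace ℝ (Fin p)) := fun w => w + α • (Qe w - w) with hTdef
  -- basic facts about Qe
  have hQapp : ∀ w : (EuclideanSpace ℝ (Fin p)), Qe w = Submodule.reflection U₂ (Submodule.reflection U₁ w) := fun w => rfl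
  have hQnorm : ∀ w : (EuclideanSpace ℝ (Fin p)), ‖Qe w‖ = ‖w‖ := fun w => Qe.norm_map w
  -- norm identity
  have hTnorm : ∀ w : (EuclideanSpace ℝ (Fin p)), ‖T w‖ ^ 2 = ‖w‖ ^ 2 - α * (1 - α) * ‖Qe w - w‖ ^ 2 := by
    intro w
    have h1 : ‖T w‖ ^ 2 = ‖w‖ ^ 2 + 2 * (α * ⟪w, Qe w - w⟫) + α ^ 2 * ‖Qe w - w‖ ^ 2 := by
      rw [hTdef]
      simp only
      rw [norm_add_sq_real, real_inner_smul_right, norm_smul, mul_pow, Real.norm_eq_abs,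
        abs_of_pos hα0]
    have h2 : ‖Qe w - w‖ ^ 2 = 2 * ‖w‖ ^ 2 - 2 * ⟪Qe w, w⟫ := by
      rw [norm_sub_sq_real, hQnorm]; ring
    have h3 : ⟪w, Qe w - w⟫ = ⟪Qe w, w⟫ - ‖w‖ ^ 2 := by
      rw [inner_sub_right, real_inner_self_eq_norm_sq, real_inner_comm]
    rw [h1, h3, h2]; ring
  -- fixed submodule
  set F : Submodule ℝ (EuclideanSpace ℝ (Fin p)) :=
    { carrier := {x : (EuclideanSpace ℝ (Fin p)) | Qe x = x}
      add_mem' := by intro a b ha hb; simp only [Set.mem_setOf_eq, map_add] at *; rw [ha, hb]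
      zero_mem' := by simp
      smul_mem' := by intro c a ha; simp only [Set.mem_setOf_eq, map_smul] at *; rw [ha] } with hFdef
  have hFmem : ∀ x : (EuclideanSpace ℝ (Fin p)), x ∈ F ↔ Qe x = x := fun x => Iff.rfl
  set W : Submodule ℝ (EuclideanSpace ℝ (Fin p)) := Fᗮ with hWdef
  have hrange : ∀ x : (EuclideanSpace ℝ (Fin p)), Qe x - x ∈ W := by
    intro x
    rw [hWdef, Submodule.mem_orthogonal]
    intro u hu
    rw [inner_sub_right, sub_eq_zero]
    have : ⟪Qe u, Qe x⟫ = ⟪u, x⟫ := Qe.inner_map_map u x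
    rw [(hFmem u).1 hu] at this
    rw [this]
  have hTW : ∀ w ∈ W, T w ∈ W := by
    intro w hw
    exact W.add_mem hw (W.smul_mem _ (hrange w))
  have hT0 : T 0 = 0 := by simp [hTdef]
  -- contraction on W
  have key : ∃ c : ℝ, 0 ≤ c ∧ c < 1 ∧ ∀ w ∈ W, ‖T w‖ ≤ c * ‖w‖ := by
    by_cases hW : ∀ w ∈ W, w = (0 : (EuclideanSpace ℝ (Fin p)))
    · refine ⟨1/2, by norm_num, by norm_num, fun w hw => ?_⟩
      rw [hW w hw, hT0]; simp
    · push_neg at hW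
      obtain ⟨w₁, hw₁W, hw₁0⟩ := hW
      set K : Set (EuclideanSpace ℝ (Fin p)) := (W : Set (EuclideanSpace ℝ (Fin p))) ∩ Metric.sphere 0 1 with hKdef
      have hKc : IsCompact K :=
        (isCompact_sphere (0 : (EuclideanSpace ℝ (Fin p))) 1).inter_left (F.isClosed_orthogonal)
      have hKne : K.Nonempty := by
        refine ⟨‖w₁‖⁻¹ • w₁, W.smul_mem _ hw₁W, ?_⟩
        simp [norm_smul, abs_of_nonneg (inv_nonneg.2 (norm_nonneg w₁)),
          inv_mul_cancel₀ (norm_ne_zero_iff.2 hw₁0)]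
      have hcont : ContinuousOn (fun w => ‖Qe w - w‖) K :=
        ((Qe.continuous.sub continuous_id).norm).continuousOn
      obtain ⟨w₀, hw₀K, hmin⟩ := hKc.exists_isMinOn hKne hcont
      obtain ⟨hw₀W, hw₀s⟩ := hw₀K
      have hw₀n : ‖w₀‖ = 1 := by simpa using hw₀s
      set δ : ℝ := ‖Qe w₀ - w₀‖ with hδdef
      have hδ0 : 0 < δ := by
        rcases lt_or_eq_of_le (norm_nonneg (Qe w₀ - w₀)) with h | h
        · exact h
        · exfalso
          have hfix : Qe w₀ = w₀ := by
            have := sub_eq_zero.1 (norm_eq_zero.1 h.symm)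
            exact this
          have hw₀F : w₀ ∈ F := (hFmem w₀).2 hfix
          have : w₀ = 0 := by
            have h0 : ⟪w₀, w₀⟫ = 0 := (Submodule.mem_orthogonal F w₀).1 hw₀W w₀ hw₀F
            exact inner_self_eq_zero.1 h0
          rw [this] at hw₀n; simp at hw₀n
      have hδle : ∀ w ∈ W, δ * ‖w‖ ≤ ‖Qe w - w‖ := by
        intro w hw
        rcases eq_or_ne w 0 with rfl | hw0
        · simp
        · have hmem : ‖w‖⁻¹ • w ∈ K := by
            refine ⟨W.smul_mem _ hw, ?_⟩
            simp [norm_smul, abs_of_nonneg (inv_nonneg.2 (norm_nonneg w)),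
              inv_mul_cancel₀ (norm_ne_zero_iff.2 hw0)]
          have := hmin hmem
          simp only [Set.mem_setOf_eq] at this
          have heq : ‖Qe (‖w‖⁻¹ • w) - ‖w‖⁻¹ • w‖ = ‖w‖⁻¹ * ‖Qe w - w‖ := by
            rw [map_smul, ← smul_sub, norm_smul,
              Real.norm_eq_abs, abs_of_nonneg (inv_nonneg.2 (norm_nonneg w))]
          rw [heq] at this
          have hn : (0 : ℝ) < ‖w‖ := norm_pos_iff.2 hw0
          calc δ * ‖w‖ ≤ (‖w‖⁻¹ * ‖Qe w - w‖) * ‖w‖ := by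
                exact mul_le_mul_of_nonneg_right this hn.le
            _ = ‖Qe w - w‖ := by field_simp
      set β : ℝ := α * (1 - α) * δ ^ 2 with hβdef
      have hβ0 : 0 < β := by
        have h1α : (0:ℝ) < 1 - α := by linarith
        exact mul_pos (mul_pos hα0 h1α) (pow_pos hδ0 2)
      have hβ1 : β ≤ 1 := by
        have := hTnorm w₀
        nlinarith [sq_nonneg ‖T w₀‖, hw₀n]
      refine ⟨Real.sqrt (1 - β), Real.sqrt_nonneg _, ?_, ?_⟩
      · have := Real.sqrt_lt_sqrt (by linarith : (0:ℝ) ≤ 1 - β) (by linarith : 1 - β < 1)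
        simpa using this
      · intro w hw
        have h1 : ‖T w‖ ^ 2 ≤ (1 - β) * ‖w‖ ^ 2 := by
          have h2 := hTnorm w
          have h3 := hδle w hw
          have h4 : (δ * ‖w‖) ^ 2 ≤ ‖Qe w - w‖ ^ 2 :=
            pow_le_pow_left₀ (by positivity) h3 2
          have h6 : α * (1 - α) * (δ * ‖w‖) ^ 2 ≤ α * (1 - α) * ‖Qe w - w‖ ^ 2 :=
            mul_le_mul_of_nonneg_left h4
              (le_of_lt (mul_pos hα0 (by linarith : (0:ℝ) < 1 - α)))
          rw [hβdef]
          nlinarith [h2, h6]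
        have h7 : ‖T w‖ ≤ Real.sqrt ((1 - β) * ‖w‖ ^ 2) := by
          rw [← Real.sqrt_sq (norm_nonneg (T w))]
          exact Real.sqrt_le_sqrt h1
        calc ‖T w‖ ≤ Real.sqrt ((1 - β) * ‖w‖ ^ 2) := h7
          _ = Real.sqrt (1 - β) * ‖w‖ := by
              rw [Real.sqrt_mul (by linarith) (‖w‖ ^ 2), Real.sqrt_sq (norm_nonneg w)]
  obtain ⟨c, hc0, hc1, hcT⟩ := key
  -- the iteration is given by T
  have hstep : ∀ k, v (k + 1) = T (v k) := by
    intro k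
    rw [hv k, hx₂ k, hx₁ k, hTdef]
    simp only
    have e1 : (2 : ℝ) • proj U₁ (v k) - v k = Submodule.reflection U₁ (v k) := by
      rw [Submodule.reflection_apply, Submodule.starProjection_apply]
      have : (2 : ℕ) • (Submodule.orthogonalProjection U₁ (v k) : (EuclideanSpace ℝ (Fin p))) = (2 : ℝ) • proj U₁ (v k) := by
        rw [proj]; norm_num [two_smul]
      rw [this]
    rw [e1]
    have e2 : Qe (v k) = (2 : ℝ) • proj U₂ (Submodule.reflection U₁ (v k)) - Submodule.reflection U₁ (v k) := by
      rw [hQapp, Submodule.reflection_apply, Submodule.starProjection_apply, proj]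
      norm_num [two_smul]
    rw [e2, ← e1, hαdef, proj, proj]
    set a : (EuclideanSpace ℝ (Fin p)) := (Submodule.orthogonalProjection U₁ (v k) : (EuclideanSpace ℝ (Fin p)))
    set b : (EuclideanSpace ℝ (Fin p)) := (Submodule.orthogonalProjection U₂ ((2:ℝ) • a - v k) : (EuclideanSpace ℝ (Fin p)))
    module
  -- geometric decay of differences
  have hTsub : ∀ x y : (EuclideanSpace ℝ (Fin p)), T x - T y = T (x - y) := by
    intro x y
    simp only [hTdef, map_sub]
    module
  have hd : ∀ k, (v (k + 1) - v k ∈ W) ∧ ‖v (k + 1) - v k‖ ≤ ‖v 1 - v 0‖ * c ^ k := by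
    intro k
    induction k with
    | zero => exact ⟨by rw [hstep 0, hTdef]; simpa using W.smul_mem α (hrange (v 0)),
        by simp⟩
    | succ n ih =>
      obtain ⟨ihW, ihn⟩ := ih
      have he : v (n + 2) - v (n + 1) = T (v (n + 1) - v n) := by
        rw [hstep (n + 1), hstep n, hTsub]
      constructor
      · rw [he]; exact hTW _ ihW
      · rw [he]
        calc ‖T (v (n + 1) - v n)‖ ≤ c * ‖v (n + 1) - v n‖ := hcT _ ihW
          _ ≤ c * (‖v 1 - v 0‖ * c ^ n) := by
              exact mul_le_mul_of_nonneg_left ihn hc0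
          _ = ‖v 1 - v 0‖ * c ^ (n + 1) := by ring
  -- Cauchy and limit
  have hcauchy : CauchySeq v := by
    apply cauchySeq_of_le_geometric c ‖v 1 - v 0‖ hc1
    intro n
    rw [dist_eq_norm, norm_sub_rev]
    exact (hd n).2
  obtain ⟨vstar, hvlim⟩ := cauchySeq_tendsto_of_complete hcauchy
  -- fixed point
  have hTcont : Continuous T := by
    rw [hTdef]
    exact continuous_id.add (((Qe.continuous.sub continuous_id)).const_smul α)
  have hshift : Tendsto (fun k => v (k + 1)) atTop (𝓝 vstar) :=
    hvlim.comp (tendsto_add_atTop_nat 1)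
  have hfix : T vstar = vstar := by
    have h2 : Tendsto (fun k => T (v k)) atTop (𝓝 (T vstar)) :=
      (hTcont.tendsto vstar).comp hvlim
    have h3 : (fun k => T (v k)) = fun k => v (k + 1) := by
      funext k; exact (hstep k).symm
    rw [h3] at h2
    exact tendsto_nhds_unique h2 hshift
  have hQfix : Qe vstar = vstar := by
    have h0 : vstar + α • (Qe vstar - vstar) = vstar := by
      conv_rhs => rw [← hfix]
    have h1 : α • (Qe vstar - vstar) = 0 := by
      have := add_eq_left.1 h0
      exact this
    have h4 : Qe vstar - vstar = 0 := by
      rcases smul_eq_zero.1 h1 with h | h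
      · exact absurd h (ne_of_gt hα0)
      · exact h
    exact sub_eq_zero.1 h4
  -- projection facts
  have hpc : ∀ U : Submodule ℝ (EuclideanSpace ℝ (Fin p)), Continuous (proj U) := by
    intro U
    exact continuous_subtype_val.comp (Submodule.orthogonalProjection U).continuous
  set xs : (EuclideanSpace ℝ (Fin p)) := proj U₁ vstar with hxs
  -- x1 tendsto
  have hx1lim : Tendsto x₁ atTop (𝓝 xs) := by
    rw [← tendsto_add_atTop_iff_nat 1]
    have : (fun k => x₁ (k + 1)) = fun k => proj U₁ (v k) := by
      funext k; exact hx₁ k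
    rw [this]
    exact ((hpc U₁).tendsto vstar).comp hvlim
  -- key equality
  have e1 : (2 : ℝ) • xs - vstar = Submodule.reflection U₁ vstar := by
    rw [Submodule.reflection_apply, Submodule.starProjection_apply, hxs, proj]
    norm_num [two_smul]
  have e2 : Submodule.reflection U₂ (Submodule.reflection U₁ vstar) = vstar := hQfix
  have e3 : (2 : ℝ) • proj U₂ (Submodule.reflection U₁ vstar) = (2 : ℝ) • xs := by
    have h5 : Submodule.reflection U₂ (Submodule.reflection U₁ vstar)
        = (2 : ℝ) • proj U₂ (Submodule.reflection U₁ vstar) - Submodule.reflection U₁ vstar := by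
      rw [Submodule.reflection_apply, Submodule.starProjection_apply, proj]; norm_num [two_smul]
    have h6 : (2 : ℝ) • proj U₂ (Submodule.reflection U₁ vstar) - Submodule.reflection U₁ vstar = vstar := by
      rw [← h5]; exact e2
    calc (2 : ℝ) • proj U₂ (Submodule.reflection U₁ vstar)
        = ((2 : ℝ) • proj U₂ (Submodule.reflection U₁ vstar) - Submodule.reflection U₁ vstar)
          + Submodule.reflection U₁ vstar := by module
      _ = vstar + Submodule.reflection U₁ vstar := by rw [h6]
      _ = vstar + ((2 : ℝ) • xs - vstar) := by rw [← e1]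
      _ = (2 : ℝ) • xs := by module
  have e4 : proj U₂ ((2 : ℝ) • xs - vstar) = xs := by
    rw [e1]
    exact smul_right_injective (EuclideanSpace ℝ (Fin p)) (two_ne_zero) e3
  -- x2 tendsto
  have hx2lim : Tendsto x₂ atTop (𝓝 xs) := by
    rw [← tendsto_add_atTop_iff_nat 1]
    have h6 : (fun k => x₂ (k + 1)) = fun k => proj U₂ ((2 : ℝ) • proj U₁ (v k) - v k) := by
      funext k; rw [hx₂ k, hx₁ k]
    rw [h6]
    have hg : Continuous fun w : (EuclideanSpace ℝ (Fin p)) => proj U₂ ((2 : ℝ) • proj U₁ w - w) :=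
      (hpc U₂).comp ((((hpc U₁).const_smul (2:ℝ))).sub continuous_id)
    have := (hg.tendsto vstar).comp hvlim
    rw [← hxs, e4] at this
    exact this
  refine ⟨vstar, hvlim, hx1lim, hx2lim, e4.symm, Submodule.mem_inf.2 ⟨?_, ?_⟩⟩
  · exact Submodule.coe_mem _
  · show proj U₁ vstar ∈ U₂
    rw [← hxs, ← e4]
    exact Submodule.coe_mem _
end

section
/- Let $U_1, U_2 \subseteq \mathbb{R}^p$ be linear subspaces, $\theta \in (0,2)$, and $v^0 \in \mathbb{R}^p$. The shadow sequence $x_1^{k} = P_{U_1}(v^{k-1})$ of the relaxed Douglas–Rachford iteration started at $v^0$ converges to $x^* = P_{U_1 \cap U_2}(v^0)$; that is, the Douglas–Rachford algorithm solves the best approximation problem of projecting $v^0$ onto $U_1 \cap U_2$. -/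
open Filter Topology

variable {E : Type*} [NormedAddCommGroup E] [InnerProductSpace ℝ E] [FiniteDimensional ℝ E]

noncomputable def avgMap (Q : E ≃ₗᵢ[ℝ] E) (t : ℝ) : E →L[ℝ] E :=
  (1 - t) • ContinuousLinearMap.id ℝ E + t • (Q.toContinuousLinearEquiv : E →L[ℝ] E)

theorem avgMap_apply (Q : E ≃ₗᵢ[ℝ] E) (t : ℝ) (x : E) :
    avgMap Q t x = (1 - t) • x + t • Q x := rfl

theorem avgMap_norm_sq (Q : E ≃ₗᵢ[ℝ] E) (t : ℝ) (w : E) :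
    ‖avgMap Q t w‖ ^ 2 = ‖w‖ ^ 2 - t * (1 - t) * ‖Q w - w‖ ^ 2 := by
  rw [avgMap_apply, norm_add_sq_real, norm_sub_sq_real, real_inner_smul_left,
    real_inner_smul_right, norm_smul, norm_smul, Q.norm_map, real_inner_comm (Q w) w]
  simp only [mul_pow, Real.norm_eq_abs, sq_abs]
  ring

set_option linter.unusedSectionVars false

theorem avgMap_contract (Q : E ≃ₗᵢ[ℝ] E) {t : ℝ} (ht : t ∈ Set.Ioo (0:ℝ) 1) {w : E}
    (hw : w ∈ (LinearMap.eqLocus (Q.toLinearEquiv : E →ₗ[ℝ] E) LinearMap.id)ᗮ)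
    (hw0 : w ≠ 0) : ‖avgMap Q t w‖ < ‖w‖ := by
  have hQw : Q w ≠ w := by
    intro h
    have hm : w ∈ LinearMap.eqLocus (Q.toLinearEquiv : E →ₗ[ℝ] E) LinearMap.id := h
    exact hw0 (Submodule.mem_bot ℝ |>.1
      ((Submodule.orthogonal_disjoint _).le_bot (Submodule.mem_inf.2 ⟨hm, hw⟩)))
  have h1 : ‖avgMap Q t w‖ ^ 2 < ‖w‖ ^ 2 := by
    rw [avgMap_norm_sq]
    have hne : Q w - w ≠ 0 := sub_ne_zero.2 hQw
    have : 0 < t * (1 - t) * ‖Q w - w‖ ^ 2 := by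
      apply mul_pos (mul_pos ht.1 (by linarith [ht.2]))
      exact pow_pos (norm_pos_iff.2 hne) 2
    linarith
  exact lt_of_pow_lt_pow_left₀ 2 (norm_nonneg w) h1

theorem avgMap_tendsto (Q : E ≃ₗᵢ[ℝ] E) {t : ℝ} (ht : t ∈ Set.Ioo (0:ℝ) 1) (v : E) :
    Tendsto (fun k => (avgMap Q t)^[k] v) atTop
      (𝓝 (Submodule.orthogonalProjection
        (LinearMap.eqLocus (Q.toLinearEquiv : E →ₗ[ℝ] E) LinearMap.id) v : E)) := by
  set F := LinearMap.eqLocus (Q.toLinearEquiv : E →ₗ[ℝ] E) LinearMap.id with hF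
  set T := avgMap Q t with hT
  have hfixQ : ∀ x ∈ F, Q x = x := fun x hx => hx
  have hfixT : ∀ x ∈ F, T x = x := by
    intro x hx
    rw [hT, avgMap_apply, hfixQ x hx, ← add_smul]
    simp
  have hQorth : ∀ w ∈ Fᗮ, Q w ∈ Fᗮ := by
    intro w hw
    rw [Submodule.mem_orthogonal]
    intro u hu
    calc inner ℝ u (Q w) = inner ℝ (Q u) (Q w) := by rw [hfixQ u hu]
      _ = (inner ℝ u w : ℝ) := Q.inner_map_map u w
      _ = 0 := (Submodule.mem_orthogonal F w).1 hw u hu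
  have hTorth : ∀ w ∈ Fᗮ, T w ∈ Fᗮ := by
    intro w hw
    rw [hT, avgMap_apply]
    exact Submodule.add_mem _ (Submodule.smul_mem _ _ hw)
      (Submodule.smul_mem _ _ (hQorth w hw))
  obtain ⟨c, hc0, hc1, hcle⟩ : ∃ c, 0 ≤ c ∧ c < 1 ∧ ∀ w ∈ Fᗮ, ‖T w‖ ≤ c * ‖w‖ := by
    by_cases hbot : Fᗮ = ⊥
    · refine ⟨0, le_refl _, one_pos, fun w hw => ?_⟩
      rw [hbot, Submodule.mem_bot] at hw
      simp [hw]
    · obtain ⟨x0, hx0F, hx00⟩ := Submodule.ne_bot_iff _ |>.1 hbot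
      set S : Set E := (Fᗮ : Set E) ∩ Metric.sphere 0 1 with hS
      have hSc : IsCompact S :=
        (isCompact_sphere (0:E) 1).inter_left (Submodule.closed_of_finiteDimensional Fᗮ)
      have hSne : S.Nonempty := by
        refine ⟨‖x0‖⁻¹ • x0, Submodule.smul_mem _ _ hx0F, ?_⟩
        simp [norm_smul, inv_mul_cancel₀ (norm_ne_zero_iff.2 hx00)]
      obtain ⟨w0, hw0S, hw0max⟩ := hSc.exists_isMaxOn hSne (T.continuous.norm.continuousOn)
      have hw0norm : ‖w0‖ = 1 := by
        have := hw0S.2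
        simpa using this
      have hw0ne : w0 ≠ 0 := by
        intro h; rw [h] at hw0norm; simp at hw0norm
      refine ⟨‖T w0‖, norm_nonneg _, ?_, ?_⟩
      · have := avgMap_contract Q ht hw0S.1 hw0ne
        rwa [hw0norm] at this
      · intro w hw
        rcases eq_or_ne w 0 with rfl | hwne
        · simp
        · set u : E := ‖w‖⁻¹ • w with hu
          have huS : u ∈ S := by
            refine ⟨Submodule.smul_mem _ _ hw, ?_⟩
            simp [hu, norm_smul, inv_mul_cancel₀ (norm_ne_zero_iff.2 hwne)]
          have h1 : ‖T u‖ ≤ ‖T w0‖ := hw0max huS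
          have h2 : T w = ‖w‖ • T u := by
            rw [hu, map_smul, smul_smul, mul_inv_cancel₀ (norm_ne_zero_iff.2 hwne), one_smul]
          rw [h2, norm_smul, Real.norm_eq_abs, abs_of_nonneg (norm_nonneg w), mul_comm]
          exact mul_le_mul_of_nonneg_right h1 (norm_nonneg w)
  set L : E := (Submodule.orthogonalProjection F v : E) with hL
  set w : E := v - L with hwdef
  have hwF : w ∈ Fᗮ := Submodule.sub_starProjection_mem_orthogonal v
  have hLF : L ∈ F := SetLike.coe_mem _
  have hiter : ∀ k, T^[k] v = L + T^[k] w ∧ T^[k] w ∈ Fᗮ ∧ ‖T^[k] w‖ ≤ c ^ k * ‖w‖ := by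
    intro k
    induction k with
    | zero =>
      refine ⟨?_, by simpa using hwF, by simp⟩
      simp only [Function.iterate_zero, id_eq]
      rw [hwdef]; abel
    | succ k ih =>
      obtain ⟨ih1, ih2, ih3⟩ := ih
      refine ⟨?_, by rw [Function.iterate_succ_apply']; exact hTorth _ ih2, ?_⟩
      · rw [Function.iterate_succ_apply', Function.iterate_succ_apply', ih1, map_add,
          hfixT L hLF]
      · rw [Function.iterate_succ_apply']
        calc ‖T (T^[k] w)‖ ≤ c * ‖T^[k] w‖ := hcle _ ih2
          _ ≤ c * (c ^ k * ‖w‖) := mul_le_mul_of_nonneg_left ih3 hc0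
          _ = c ^ (k+1) * ‖w‖ := by ring
  have hw0 : Tendsto (fun k => T^[k] w) atTop (𝓝 0) := by
    refine squeeze_zero_norm (fun k => (hiter k).2.2) ?_
    have := (tendsto_pow_atTop_nhds_zero_of_lt_one hc0 hc1).mul_const ‖w‖
    simpa using this
  have heq : (fun k => T^[k] v) = fun k => L + T^[k] w := funext fun k => (hiter k).1
  rw [heq]
  simpa using tendsto_const_nhds.add hw0


section Application

variable {p : ℕ}

theorem proj_sub (U : Submodule ℝ (EuclideanSpace ℝ (Fin p))) (a b : EuclideanSpace ℝ (Fin p)) :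
    proj U (a - b) = proj U a - proj U b := by
  simp [proj, map_sub]

theorem proj_smul (U : Submodule ℝ (EuclideanSpace ℝ (Fin p))) (c : ℝ)
    (a : EuclideanSpace ℝ (Fin p)) : proj U (c • a) = c • proj U a := by
  simp [proj, map_smul]

theorem proj_eq_self {U : Submodule ℝ (EuclideanSpace ℝ (Fin p))} {x : EuclideanSpace ℝ (Fin p)}
    (h : x ∈ U) : proj U x = x := by
  exact Submodule.starProjection_eq_self_iff.2 h

theorem proj_mem (U : Submodule ℝ (EuclideanSpace ℝ (Fin p))) (x : EuclideanSpace ℝ (Fin p)) :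
    proj U x ∈ U := SetLike.coe_mem _

theorem nsmul_eq_rsmul (z : EuclideanSpace ℝ (Fin p)) : (2 : ℕ) • z = (2 : ℝ) • z := by
  rw [← Nat.cast_smul_eq_nsmul ℝ]
  norm_num

end Application

theorem stmt2 {p : ℕ} (U₁ U₂ : Submodule ℝ (EuclideanSpace ℝ (Fin p)))
    (θ : ℝ) (hθ : θ ∈ Set.Ioo (0 : ℝ) 2)
    (v x₁ : ℕ → EuclideanSpace ℝ (Fin p))
    (hx₁ : ∀ k, x₁ (k + 1) = proj U₁ (v k))
    (hv : ∀ k, v (k + 1) =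
      v k + θ • (proj U₂ ((2 : ℝ) • proj U₁ (v k) - v k) - proj U₁ (v k))) :
    Tendsto x₁ atTop (𝓝 (proj (U₁ ⊓ U₂) (v 0))) := by
  obtain ⟨hθ0, hθ2⟩ := hθ
  set Q := (Submodule.reflection U₁).trans (Submodule.reflection U₂) with hQdef
  have ht : θ / 2 ∈ Set.Ioo (0:ℝ) 1 := ⟨by linarith, by linarith⟩
  have hQapp : ∀ x, Q x = (2:ℕ) • proj U₂ ((2:ℝ) • proj U₁ x - x) - ((2:ℝ) • proj U₁ x - x) := by
    intro x
    show Submodule.reflection U₂ (Submodule.reflection U₁ x) = _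
    rw [Submodule.reflection_apply (Submodule.reflection U₁ x), Submodule.reflection_apply x]
    show (2:ℕ) • proj U₂ ((2:ℕ) • proj U₁ x - x) - ((2:ℕ) • proj U₁ x - x) = _
    rw [nsmul_eq_rsmul (proj U₁ x)]
  have hTv : ∀ x, avgMap Q (θ/2) x
      = x + θ • (proj U₂ ((2 : ℝ) • proj U₁ x - x) - proj U₁ x) := by
    intro x
    rw [avgMap_apply, hQapp, nsmul_eq_rsmul]
    set a := proj U₁ x
    set y := proj U₂ ((2:ℝ) • a - x)
    module
  have hvk : ∀ k, v k = (avgMap Q (θ/2))^[k] (v 0) := by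
    intro k
    induction k with
    | zero => simp
    | succ k ih => rw [hv k, ih, ← hTv, Function.iterate_succ_apply']
  set F := LinearMap.eqLocus (Q.toLinearEquiv : EuclideanSpace ℝ (Fin p) →ₗ[ℝ] EuclideanSpace ℝ (Fin p)) LinearMap.id with hFdef
  have hmemF : ∀ x, x ∈ F ↔ proj U₁ x = proj U₂ x := by
    intro x
    constructor
    · intro hx
      have h1 : Submodule.reflection U₂ (Submodule.reflection U₁ x) = x := hx
      have h2 : Submodule.reflection U₁ x = Submodule.reflection U₂ x := by
        have h3 := congrArg (Submodule.reflection U₂) h1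
        rwa [Submodule.reflection_reflection] at h3
      rw [Submodule.reflection_apply, Submodule.reflection_apply, nsmul_eq_rsmul, nsmul_eq_rsmul, sub_left_inj] at h2
      exact smul_right_injective _ (two_ne_zero) h2
    · intro hx
      show Submodule.reflection U₂ (Submodule.reflection U₁ x) = x
      have harg : proj U₂ ((2:ℝ) • proj U₁ x - x) = proj U₁ x := by
        rw [proj_sub, proj_smul, hx, proj_eq_self (proj_mem U₂ x), ← hx]
        module
      rw [Submodule.reflection_apply (Submodule.reflection U₁ x), Submodule.reflection_apply x]
      show (2:ℕ) • proj U₂ ((2:ℕ) • proj U₁ x - x) - ((2:ℕ) • proj U₁ x - x) = x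
      rw [nsmul_eq_rsmul (proj U₁ x), harg, nsmul_eq_rsmul]
      module
  set L : EuclideanSpace ℝ (Fin p) := (Submodule.orthogonalProjection F (v 0) : EuclideanSpace ℝ (Fin p))
    with hLdef
  set g := proj U₁ L with hgdef
  have hLF : L ∈ F := SetLike.coe_mem _
  have hgG : g ∈ U₁ ⊓ U₂ := by
    refine Submodule.mem_inf.2 ⟨proj_mem U₁ L, ?_⟩
    rw [hgdef, (hmemF L).1 hLF]
    exact proj_mem U₂ L
  have hGF : U₁ ⊓ U₂ ≤ F := by
    intro x hx
    exact (hmemF x).2 (by rw [proj_eq_self (Submodule.mem_inf.1 hx).1,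
      proj_eq_self (Submodule.mem_inf.1 hx).2])
  have h1 : v 0 - L ∈ Fᗮ := Submodule.sub_starProjection_mem_orthogonal (v 0)
  have h2 : L - g ∈ U₁ᗮ := Submodule.sub_starProjection_mem_orthogonal L
  have horth : v 0 - g ∈ (U₁ ⊓ U₂)ᗮ := by
    have h3 := Submodule.add_mem _ (Submodule.orthogonal_le hGF h1)
      (Submodule.orthogonal_le inf_le_left h2)
    simpa using h3
  have hproj : proj (U₁ ⊓ U₂) (v 0) = g :=
    Submodule.eq_starProjection_of_mem_orthogonal hgG horth
  have hconv := avgMap_tendsto Q ht (v 0)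
  have hP : Continuous (fun y : EuclideanSpace ℝ (Fin p) => proj U₁ y) :=
    continuous_subtype_val.comp (Submodule.orthogonalProjection U₁).continuous
  have h4 : Tendsto (fun k => x₁ (k + 1)) atTop (𝓝 g) := by
    have h5 := (hP.tendsto L).comp hconv
    have h6 : (fun k => x₁ (k + 1)) = fun k => proj U₁ ((avgMap Q (θ/2))^[k] (v 0)) := by
      funext k
      rw [hx₁ k, hvk k]
    rw [h6]
    exact h5
  rw [hproj]
  exact (tendsto_add_atTop_iff_nat 1).1 h4
end

section
/- Let $U_1, U_2 \subseteq \mathbb{R}^p$ be linear subspaces and $\theta \in (0,2)$. The fixed point set of the relaxed Douglas–Rachford operator $T_\theta(v) := v + \theta\,(P_{U_2}(2 P_{U_1}(v) - v) - P_{U_1}(v))$ equals $(U_1 \cap U_2) + (U_1^\perp \cap U_2^\perp)$; in particular it is independent of $\theta$. -/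
/-- The relaxed Douglas–Rachford operator. -/
noncomputable def drOp {p : ℕ} (U₁ U₂ : Submodule ℝ (EuclideanSpace ℝ (Fin p)))
    (θ : ℝ) (v : EuclideanSpace ℝ (Fin p)) : EuclideanSpace ℝ (Fin p) :=
  v + θ • (proj U₂ ((2 : ℝ) • proj U₁ v - v) - proj U₁ v)

theorem stmt5 {p : ℕ} (U₁ U₂ : Submodule ℝ (EuclideanSpace ℝ (Fin p)))
    (θ : ℝ) (hθ : θ ∈ Set.Ioo (0 : ℝ) 2) :
    {v : EuclideanSpace ℝ (Fin p) | drOp U₁ U₂ θ v = v} =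
      (((U₁ ⊓ U₂) ⊔ (U₁ᗮ ⊓ U₂ᗮ) : Submodule ℝ (EuclideanSpace ℝ (Fin p))) :
        Set (EuclideanSpace ℝ (Fin p))) := by
  have hθ0 : θ ≠ 0 := ne_of_gt hθ.1
  ext v
  simp only [Set.mem_setOf_eq, SetLike.mem_coe, drOp]
  constructor
  · intro h
    have h2 : proj U₂ ((2 : ℝ) • proj U₁ v - v) = proj U₁ v := by
      have := h
      rw [add_eq_left, smul_eq_zero] at this
      rcases this with h' | h'
      · exact absurd h' hθ0
      · exact sub_eq_zero.mp h'
    set a := proj U₁ v with ha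
    have haU1 : a ∈ U₁ := (U₁.orthogonalProjection v).2
    have hva : v - a ∈ U₁ᗮ := Submodule.sub_starProjection_mem_orthogonal v
    have haU2 : a ∈ U₂ := h2 ▸ (U₂.orthogonalProjection ((2 : ℝ) • proj U₁ v - v)).2
    have hva2 : v - a ∈ U₂ᗮ := by
      have := Submodule.sub_starProjection_mem_orthogonal (K := U₂) ((2 : ℝ) • proj U₁ v - v)
      rw [show (U₂.starProjection ((2:ℝ) • proj U₁ v - v) :
          EuclideanSpace ℝ (Fin p)) = proj U₂ ((2:ℝ) • proj U₁ v - v) from rfl, h2] at this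
      have h3 : (2 : ℝ) • a - v - a = -(v - a) := by abel_nf; module
      rw [h3] at this
      simpa using (U₂ᗮ).neg_mem this
    have : v = a + (v - a) := by abel
    rw [this]
    exact Submodule.add_mem_sup ⟨haU1, haU2⟩ ⟨hva, hva2⟩
  · intro h
    rw [Submodule.mem_sup] at h
    obtain ⟨a, ha, b, hb, rfl⟩ := h
    have h1 : proj U₁ (a + b) = a :=
      Submodule.eq_starProjection_of_mem_orthogonal' ha.1 hb.1 rfl
    have h2 : proj U₂ ((2 : ℝ) • a - (a + b)) = a := by
      apply Submodule.eq_starProjection_of_mem_orthogonal' ha.2 ((U₂ᗮ).neg_mem hb.2)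
      module
    rw [h1, h2]
    simp
end
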